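/- Let l ∈ C¹([0,M], (0,1/2)), let β ≥ 0 be a constant, set C(x) = 2(1/2 − l(x))^{β+1}/(β+1), and define the division kernel q(x,α) = ((α − l(x))^β / C(x)) 1_{{l(x) ≤ α ≤ 1/2}} + ((1 − α − l(x))^β / C(x)) 1_{{1/2 < α ≤ 1 − l(x)}}. Then for every x ∈ [0,M] and u ∈ (0,1): F_x^{-1}(u) = (1/2 − l(x))(2u)^{1/(β+1)} + l(x) if 0 < u ≤ 1/2, and F_x^{-1}(u) = 1 − l(x) − (1/2 − l(x))(2(1−u))^{1/(β+1)} if 1/2 < u < 1. Moreover, if 0 ≤ l(x) + x l'(x) ≤ 1 for every x ∈ (0,M), then q satisfies Assumption (Q). -/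

import Mathlib

open MeasureTheory Set Filter

/-- Cumulative distribution function `F_x(u) = ∫_0^u q(x,α) dα` associated to a
division kernel. -/
noncomputable def cdf (q : ℝ → ℝ → ℝ) (x u : ℝ) : ℝ := ∫ α in (0:ℝ)..u, q x α

/-- Generalized inverse `F_x^{-1}(v) = inf {u ∈ [0,1] : F_x(u) ≥ v}`. -/
noncomputable def cdfInv (q : ℝ → ℝ → ℝ) (x v : ℝ) : ℝ :=
  sInf {u ∈ Set.Icc (0:ℝ) 1 | v ≤ cdf q x u}

/-- A division kernel on `[0,M]`: measurable, nonnegative, a probability density in the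
second variable, symmetric with respect to `1/2`. -/
def IsDivisionKernel (M : ℝ) (q : ℝ → ℝ → ℝ) : Prop :=
  Measurable (Function.uncurry q) ∧
  (∀ x ∈ Set.Icc (0:ℝ) M, ∀ α ∈ Set.Icc (0:ℝ) 1, 0 ≤ q x α) ∧
  (∀ x ∈ Set.Icc (0:ℝ) M, (∫ α in (0:ℝ)..1, q x α) = 1) ∧
  (∀ x ∈ Set.Icc (0:ℝ) M, ∀ α ∈ Set.Icc (0:ℝ) 1, q x α = q x (1 - α))

/-- Assumption (Q): for all `u ∈ (0,1)` and `0 ≤ x ≤ y ≤ M`,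
`x·F_x^{-1}(u) ≤ y·F_y^{-1}(u)` and `x·(1 − F_x^{-1}(u)) ≤ y·(1 − F_y^{-1}(u))`. -/
def AssumptionQ (M : ℝ) (q : ℝ → ℝ → ℝ) : Prop :=
  ∀ u ∈ Set.Ioo (0:ℝ) 1, ∀ x y : ℝ, 0 ≤ x → x ≤ y → y ≤ M →
    x * cdfInv q x u ≤ y * cdfInv q y u ∧
    x * (1 - cdfInv q x u) ≤ y * (1 - cdfInv q y u)

section AuxStatement3

lemma aux_cont_rpow (β : ℝ) (hβ : 0 ≤ β) (L : ℝ) : Continuous fun α : ℝ => (α - L) ^ β :=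
  (continuous_iff_continuousAt.2 fun _ => Real.continuousAt_rpow_const _ _ (Or.inr hβ)).comp
    (continuous_id.sub continuous_const)

lemma aux_cont_rpow' (β : ℝ) (hβ : 0 ≤ β) (L : ℝ) : Continuous fun α : ℝ => (1 - α - L) ^ β :=
  (continuous_iff_continuousAt.2 fun _ => Real.continuousAt_rpow_const _ _ (Or.inr hβ)).comp
    (by continuity)

lemma aux_decomp (β : ℝ) (hβ : 0 ≤ β) (L Cx : ℝ)
    (f : ℝ → ℝ)
    (hf : ∀ α, f α = (if L ≤ α ∧ α ≤ 1/2 then (α - L)^β / Cx else 0)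
       + (if 1/2 < α ∧ α ≤ 1 - L then (1 - α - L)^β / Cx else 0))
    (t : ℝ) (ht : 0 ≤ t) :
    (∫ α in (0:ℝ)..t, f α)
      = (∫ α in Ioc 0 t ∩ Icc L (1/2), (α - L)^β / Cx)
      + (∫ α in Ioc 0 t ∩ Ioc (1/2) (1 - L), (1 - α - L)^β / Cx) := by
  have hfe : f = fun α => (Icc L (1/2)).indicator (fun α => (α - L)^β / Cx) α
      + (Ioc (1/2) (1-L)).indicator (fun α => (1 - α - L)^β / Cx) α := by
    funext α
    rw [hf]
    simp [Set.indicator_apply, Set.mem_Icc, Set.mem_Ioc]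
  rw [intervalIntegral.integral_of_le ht, hfe, integral_add
      ((((aux_cont_rpow β hβ L).div_const Cx).integrableOn_Ioc).indicator measurableSet_Icc)
      ((((aux_cont_rpow' β hβ L).div_const Cx).integrableOn_Ioc).indicator measurableSet_Ioc),
    setIntegral_indicator measurableSet_Icc, setIntegral_indicator measurableSet_Ioc]

lemma aux_int_rpow (β : ℝ) (hβ : 0 ≤ β) (L a b : ℝ) :
    (∫ α in a..b, (α - L)^β) = (b - L)^(β+1)/(β+1) - (a - L)^(β+1)/(β+1) := by
  rw [intervalIntegral.integral_comp_sub_right (fun y => y^β) L,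
    integral_rpow (Or.inl (by linarith))]
  ring

lemma aux_int_rpow' (β : ℝ) (hβ : 0 ≤ β) (L a b : ℝ) :
    (∫ α in a..b, (1 - α - L)^β) = (1 - L - a)^(β+1)/(β+1) - (1 - L - b)^(β+1)/(β+1) := by
  have h : ∀ α : ℝ, (1 - α - L)^β = ((1 - L) - α)^β := fun α => by ring_nf
  simp only [h]
  rw [intervalIntegral.integral_comp_sub_left (fun y => y^β) (1 - L),
    integral_rpow (Or.inl (by linarith))]
  ring

variable {β L Cx : ℝ} {f : ℝ → ℝ}

lemma aux_cdf_zero (hβ : 0 ≤ β) (hL0 : 0 < L) (hLh : L < 1/2)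
    (hf : ∀ α, f α = (if L ≤ α ∧ α ≤ 1/2 then (α - L)^β / Cx else 0)
       + (if 1/2 < α ∧ α ≤ 1 - L then (1 - α - L)^β / Cx else 0))
    (t : ℝ) (ht0 : 0 ≤ t) (htL : t ≤ L) :
    (∫ α in (0:ℝ)..t, f α) = 0 := by
  rw [aux_decomp β hβ L Cx f hf t ht0]
  have h1 : Ioc 0 t ∩ Icc L (1/2) ⊆ ({L} : Set ℝ) := by
    rintro α ⟨hα1, hα2⟩
    have : α = L := le_antisymm (hα1.2.trans htL) hα2.1
    simp [this]
  have h2 : Ioc 0 t ∩ Ioc (1/2) (1 - L) = ∅ := by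
    apply eq_empty_iff_forall_notMem.2
    rintro α ⟨hα1, hα2⟩
    have := hα1.2.trans htL
    linarith [hα2.1]
  have hz1 : (∫ α in Ioc 0 t ∩ Icc L (1/2), (α - L)^β / Cx) = 0 := by
    have hm : volume (Ioc 0 t ∩ Icc L (1/2)) = 0 :=
      measure_mono_null h1 (measure_singleton L)
    rw [Measure.restrict_eq_zero.2 hm, integral_zero_measure]
  rw [h2, hz1]
  simp

lemma aux_cdf_low (hβ : 0 ≤ β) (hL0 : 0 < L) (hLh : L < 1/2)
    (hCx : Cx = 2 * (1/2 - L) ^ (β+1) / (β+1))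
    (hf : ∀ α, f α = (if L ≤ α ∧ α ≤ 1/2 then (α - L)^β / Cx else 0)
       + (if 1/2 < α ∧ α ≤ 1 - L then (1 - α - L)^β / Cx else 0))
    (t : ℝ) (htL : L ≤ t) (ht2 : t ≤ 1/2) :
    (∫ α in (0:ℝ)..t, f α) = (t - L)^(β+1) / (2 * (1/2 - L)^(β+1)) := by
  have hb1 : (0:ℝ) < β + 1 := by linarith
  have hD : (0:ℝ) < 1/2 - L := by linarith
  have hDp : (0:ℝ) < (1/2 - L)^(β+1) := Real.rpow_pos_of_pos hD _
  rw [aux_decomp β hβ L Cx f hf t (by linarith)]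
  have h1 : Ioc 0 t ∩ Icc L (1/2) = Icc L t := by
    ext α
    simp only [mem_inter_iff, mem_Ioc, mem_Icc]
    constructor
    · rintro ⟨h1, h2⟩; exact ⟨h2.1, h1.2⟩
    · rintro ⟨h1, h2⟩; exact ⟨⟨by linarith, h2⟩, h1, by linarith⟩
  have h2 : Ioc 0 t ∩ Ioc (1/2) (1 - L) = ∅ := by
    apply eq_empty_iff_forall_notMem.2
    rintro α ⟨hα1, hα2⟩
    linarith [hα1.2, hα2.1]
  rw [h1, h2, integral_Icc_eq_integral_Ioc,
    ← intervalIntegral.integral_of_le htL, intervalIntegral.integral_div,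
    aux_int_rpow β hβ L L t]
  have hz : (L - L : ℝ)^(β+1) = 0 := by
    rw [sub_self, Real.zero_rpow (by linarith)]
  rw [hz, hCx]
  rw [Measure.restrict_empty, integral_zero_measure]
  field_simp
  ring

lemma aux_cdf_high (hβ : 0 ≤ β) (hL0 : 0 < L) (hLh : L < 1/2)
    (hCx : Cx = 2 * (1/2 - L) ^ (β+1) / (β+1))
    (hf : ∀ α, f α = (if L ≤ α ∧ α ≤ 1/2 then (α - L)^β / Cx else 0)
       + (if 1/2 < α ∧ α ≤ 1 - L then (1 - α - L)^β / Cx else 0))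
    (t : ℝ) (ht1 : 1/2 ≤ t) (ht2 : t ≤ 1 - L) :
    (∫ α in (0:ℝ)..t, f α) = 1 - (1 - L - t)^(β+1) / (2 * (1/2 - L)^(β+1)) := by
  have hb1 : (0:ℝ) < β + 1 := by linarith
  have hD : (0:ℝ) < 1/2 - L := by linarith
  have hDp : (0:ℝ) < (1/2 - L)^(β+1) := Real.rpow_pos_of_pos hD _
  rw [aux_decomp β hβ L Cx f hf t (by linarith)]
  have h1 : Ioc 0 t ∩ Icc L (1/2) = Icc L (1/2) := by
    apply inter_eq_right.2
    rintro α ⟨hα1, hα2⟩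
    exact ⟨by linarith, by linarith⟩
  have h2 : Ioc 0 t ∩ Ioc (1/2) (1 - L) = Ioc (1/2) t := by
    ext α
    simp only [mem_inter_iff, mem_Ioc]
    constructor
    · rintro ⟨ha, hb⟩; exact ⟨hb.1, ha.2⟩
    · rintro ⟨ha, hb⟩; exact ⟨⟨by linarith, hb⟩, ha, by linarith⟩
  rw [h1, h2, integral_Icc_eq_integral_Ioc,
    ← intervalIntegral.integral_of_le (le_of_lt hLh),
    ← intervalIntegral.integral_of_le ht1,
    intervalIntegral.integral_div, intervalIntegral.integral_div,
    aux_int_rpow β hβ L L (1/2), aux_int_rpow' β hβ L (1/2) t]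
  have hz : (L - L : ℝ)^(β+1) = 0 := by
    rw [sub_self, Real.zero_rpow (by linarith)]
  have he : (1/2 - L : ℝ)^(β+1) = (1 - L - 1/2 : ℝ)^(β+1) := by ring_nf
  rw [hz, hCx, ← he]
  set Dp := (1/2 - L : ℝ)^(β+1) with hDpdef
  set E := (1 - L - t : ℝ)^(β+1) with hEdef
  have hDne : Dp ≠ 0 := ne_of_gt hDp
  field_simp
  ring

lemma aux_monoA (M : ℝ) (l : ℝ → ℝ) (hl : ContDiffOn ℝ 1 l (Set.Icc 0 M))
    (hs : ∀ x ∈ Set.Ioo (0:ℝ) M, 0 ≤ l x + x * deriv l x ∧ l x + x * deriv l x ≤ 1)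
    (c : ℝ) (hc0 : 0 < c) (hc1 : c ≤ 1) :
    MonotoneOn (fun x => x * ((1/2 - l x) * c + l x)) (Set.Icc 0 M) := by
  have hdiff : ∀ x ∈ Set.Ioo (0:ℝ) M, HasDerivAt (fun x => x * ((1/2 - l x) * c + l x))
      (1 * ((1/2 - l x) * c + l x) + x * ((0 - deriv l x) * c + deriv l x)) x := by
    intro x hx
    have hlx : DifferentiableAt ℝ l x :=
      ((hl.differentiableOn one_ne_zero).differentiableAt (Icc_mem_nhds hx.1 hx.2))
    exact (hasDerivAt_id x).mul
      ((((hasDerivAt_const x (1/2:ℝ)).sub hlx.hasDerivAt).mul_const c).add hlx.hasDerivAt)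
  apply monotoneOn_of_deriv_nonneg (convex_Icc 0 M)
  · exact (continuousOn_id.mul (((continuousOn_const.sub hl.continuousOn).mul
      continuousOn_const).add hl.continuousOn))
  · rw [interior_Icc]
    exact fun x hx => (hdiff x hx).differentiableAt.differentiableWithinAt
  · rw [interior_Icc]
    intro x hx
    rw [(hdiff x hx).deriv]
    obtain ⟨hs0, hs1⟩ := hs x hx
    nlinarith [mul_nonneg (by linarith : (0:ℝ) ≤ 1 - c) hs0, hx.1.le]

lemma aux_monoB (M : ℝ) (l : ℝ → ℝ) (hl : ContDiffOn ℝ 1 l (Set.Icc 0 M))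
    (hs : ∀ x ∈ Set.Ioo (0:ℝ) M, 0 ≤ l x + x * deriv l x ∧ l x + x * deriv l x ≤ 1)
    (c : ℝ) (hc0 : 0 < c) (hc1 : c ≤ 1) :
    MonotoneOn (fun x => x * (1 - l x - (1/2 - l x) * c)) (Set.Icc 0 M) := by
  have hdiff : ∀ x ∈ Set.Ioo (0:ℝ) M, HasDerivAt (fun x => x * (1 - l x - (1/2 - l x) * c))
      (1 * (1 - l x - (1/2 - l x) * c) + x * ((0 - deriv l x) - (0 - deriv l x) * c)) x := by
    intro x hx
    have hlx : DifferentiableAt ℝ l x :=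
      ((hl.differentiableOn one_ne_zero).differentiableAt (Icc_mem_nhds hx.1 hx.2))
    exact (hasDerivAt_id x).mul
      (((hasDerivAt_const x (1:ℝ)).sub hlx.hasDerivAt).sub
        (((hasDerivAt_const x (1/2:ℝ)).sub hlx.hasDerivAt).mul_const c))
  apply monotoneOn_of_deriv_nonneg (convex_Icc 0 M)
  · exact (continuousOn_id.mul ((continuousOn_const.sub hl.continuousOn).sub
      ((continuousOn_const.sub hl.continuousOn).mul continuousOn_const)))
  · rw [interior_Icc]
    exact fun x hx => (hdiff x hx).differentiableAt.differentiableWithinAt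
  · rw [interior_Icc]
    intro x hx
    rw [(hdiff x hx).deriv]
    obtain ⟨hs0, hs1⟩ := hs x hx
    nlinarith [mul_le_mul_of_nonneg_left hs1 (by linarith : (0:ℝ) ≤ 1 - c), hx.1.le]

end AuxStatement3

set_option maxHeartbeats 1000000

/-- For the division kernel
`q(x,α) = ((α − l(x))^β / C(x)) 1_{l(x) ≤ α ≤ 1/2} + ((1 − α − l(x))^β / C(x)) 1_{1/2 < α ≤ 1 − l(x)}`
with `C(x) = 2(1/2 − l(x))^{β+1}/(β+1)`, the generalized inverse of the cdf is the
explicit piecewise function below; moreover if `0 ≤ l(x) + x l'(x) ≤ 1` on `(0,M)` then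
`q` satisfies Assumption (Q). -/
theorem statement3 (M : ℝ) (hM : 0 < M) (l : ℝ → ℝ)
    (hl_diff : ContDiffOn ℝ 1 l (Set.Icc 0 M))
    (hl_range : ∀ x ∈ Set.Icc (0:ℝ) M, l x ∈ Set.Ioo (0:ℝ) (1/2))
    (β : ℝ) (hβ : 0 ≤ β)
    (C : ℝ → ℝ) (hC_def : ∀ x : ℝ, C x = 2 * (1/2 - l x) ^ (β + 1) / (β + 1))
    (q : ℝ → ℝ → ℝ)
    (hq_def : ∀ x α : ℝ, q x α =
      (if l x ≤ α ∧ α ≤ 1/2 then (α - l x) ^ β / C x else 0)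
      + (if 1/2 < α ∧ α ≤ 1 - l x then (1 - α - l x) ^ β / C x else 0)) :
    (∀ x ∈ Set.Icc (0:ℝ) M, ∀ u ∈ Set.Ioo (0:ℝ) 1,
      cdfInv q x u =
        if u ≤ 1/2 then (1/2 - l x) * (2 * u) ^ (1/(β+1)) + l x
        else 1 - l x - (1/2 - l x) * (2 * (1 - u)) ^ (1/(β+1))) ∧
    ((∀ x ∈ Set.Ioo (0:ℝ) M, 0 ≤ l x + x * deriv l x ∧ l x + x * deriv l x ≤ 1) →
      AssumptionQ M q) := by
  have hb1 : (0:ℝ) < β + 1 := by linarith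
  have hinv : ∀ x ∈ Set.Icc (0:ℝ) M, ∀ u ∈ Set.Ioo (0:ℝ) 1,
      cdfInv q x u =
        if u ≤ 1/2 then (1/2 - l x) * (2 * u) ^ (1/(β+1)) + l x
        else 1 - l x - (1/2 - l x) * (2 * (1 - u)) ^ (1/(β+1)) := by
    intro x hx u hu
    obtain ⟨hu0, hu1⟩ := hu
    obtain ⟨hL0, hLh⟩ := hl_range x hx
    have hD : (0:ℝ) < 1/2 - l x := by linarith
    have hDp : (0:ℝ) < (1/2 - l x)^(β+1) := Real.rpow_pos_of_pos hD _
    have hfq : ∀ α, q x α = (if l x ≤ α ∧ α ≤ 1/2 then (α - l x)^β / C x else 0)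
        + (if 1/2 < α ∧ α ≤ 1 - l x then (1 - α - l x)^β / C x else 0) := hq_def x
    have hCx : C x = 2 * (1/2 - l x)^(β+1)/(β+1) := hC_def x
    have hcz : ∀ t, 0 ≤ t → t ≤ l x → cdf q x t = 0 :=
      fun t h1 h2 => aux_cdf_zero hβ hL0 hLh hfq t h1 h2
    have hcl : ∀ t, l x ≤ t → t ≤ 1/2 →
        cdf q x t = (t - l x)^(β+1) / (2 * (1/2 - l x)^(β+1)) :=
      fun t h1 h2 => aux_cdf_low hβ hL0 hLh hCx hfq t h1 h2
    have hch : ∀ t, 1/2 ≤ t → t ≤ 1 - l x →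
        cdf q x t = 1 - (1 - l x - t)^(β+1) / (2 * (1/2 - l x)^(β+1)) :=
      fun t h1 h2 => aux_cdf_high hβ hL0 hLh hCx hfq t h1 h2
    by_cases hu2 : u ≤ 1/2
    · rw [if_pos hu2]
      set c := (2*u)^(1/(β+1)) with hcdef
      have hc0 : 0 < c := Real.rpow_pos_of_pos (by linarith) _
      have hc1 : c ≤ 1 := Real.rpow_le_one (by linarith) (by linarith) (by positivity)
      have hcpow : c ^ (β+1) = 2*u := by
        rw [hcdef, ← Real.rpow_mul (by linarith : (0:ℝ) ≤ 2*u), one_div,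
          inv_mul_cancel₀ (ne_of_gt hb1), Real.rpow_one]
      have hval : ((1/2 - l x)*c)^(β+1) / (2 * (1/2 - l x)^(β+1)) = u := by
        rw [Real.mul_rpow hD.le hc0.le, hcpow,
          div_eq_iff (ne_of_gt (by positivity : (0:ℝ) < 2 * (1/2 - l x)^(β+1)))]
        ring
      have hgL : l x < (1/2 - l x)*c + l x := by nlinarith
      have hg2 : (1/2 - l x)*c + l x ≤ 1/2 := by nlinarith
      have hcg : cdf q x ((1/2 - l x)*c + l x) = u := by
        rw [hcl _ hgL.le hg2, show (1/2 - l x)*c + l x - l x = (1/2 - l x)*c by ring, hval]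
      apply IsLeast.csInf_eq
      constructor
      · exact ⟨⟨by linarith, by linarith⟩, hcg.ge⟩
      · rintro t ⟨⟨ht0, ht1⟩, htu⟩
        by_contra hcon
        push_neg at hcon
        rcases le_or_gt t (l x) with h | h
        · rw [hcz t ht0 h] at htu; linarith
        · rw [hcl t h.le (by linarith)] at htu
          have hlt : (t - l x)^(β+1) < ((1/2 - l x)*c)^(β+1) :=
            Real.rpow_lt_rpow (by linarith) (by linarith) hb1
          have : (t - l x)^(β+1) / (2 * (1/2 - l x)^(β+1))
              < ((1/2 - l x)*c)^(β+1) / (2 * (1/2 - l x)^(β+1)) := by gcongr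
          rw [hval] at this
          linarith
    · push_neg at hu2
      rw [if_neg (not_le.2 hu2)]
      set c := (2*(1-u))^(1/(β+1)) with hcdef
      have hc0 : 0 < c := Real.rpow_pos_of_pos (by linarith) _
      have hc1 : c ≤ 1 := Real.rpow_le_one (by linarith) (by linarith) (by positivity)
      have hcpow : c ^ (β+1) = 2*(1-u) := by
        rw [hcdef, ← Real.rpow_mul (by linarith : (0:ℝ) ≤ 2*(1-u)), one_div,
          inv_mul_cancel₀ (ne_of_gt hb1), Real.rpow_one]
      have hval : 1 - ((1/2 - l x)*c)^(β+1) / (2 * (1/2 - l x)^(β+1)) = u := by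
        rw [Real.mul_rpow hD.le hc0.le, hcpow]
        have hdiv : (1/2 - l x)^(β+1) * (2*(1-u)) / (2 * (1/2 - l x)^(β+1)) = 1 - u := by
          rw [div_eq_iff (ne_of_gt (by positivity : (0:ℝ) < 2 * (1/2 - l x)^(β+1)))]
          ring
        rw [hdiv]
        ring
      have hg1 : 1/2 ≤ 1 - l x - (1/2 - l x)*c := by nlinarith
      have hg2 : 1 - l x - (1/2 - l x)*c < 1 - l x := by nlinarith
      have hcg : cdf q x (1 - l x - (1/2 - l x)*c) = u := by
        rw [hch _ hg1 hg2.le,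
          show 1 - l x - (1 - l x - (1/2 - l x)*c) = (1/2 - l x)*c by ring, hval]
      apply IsLeast.csInf_eq
      constructor
      · exact ⟨⟨by linarith, by linarith⟩, hcg.ge⟩
      · rintro t ⟨⟨ht0, ht1⟩, htu⟩
        by_contra hcon
        push_neg at hcon
        rcases le_or_gt t (l x) with h | h
        · rw [hcz t ht0 h] at htu; linarith
        · rcases le_or_gt t (1/2) with h2 | h2
          · rw [hcl t h.le h2] at htu
            have hle : (t - l x)^(β+1) ≤ (1/2 - l x)^(β+1) :=
              Real.rpow_le_rpow (by linarith) (by linarith) hb1.le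
            have hhalf : (1/2 - l x)^(β+1) / (2 * (1/2 - l x)^(β+1)) = 1/2 := by
              rw [div_eq_iff (ne_of_gt (by positivity : (0:ℝ) < 2 * (1/2 - l x)^(β+1)))]
              ring
            have : (t - l x)^(β+1) / (2 * (1/2 - l x)^(β+1))
                ≤ (1/2 - l x)^(β+1) / (2 * (1/2 - l x)^(β+1)) := by gcongr
            rw [hhalf] at this
            linarith
          · rw [hch t h2.le (by linarith)] at htu
            have hlt : ((1/2 - l x)*c)^(β+1) < (1 - l x - t)^(β+1) := by
              apply Real.rpow_lt_rpow (by positivity) _ hb1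
              linarith
            have : ((1/2 - l x)*c)^(β+1) / (2 * (1/2 - l x)^(β+1))
                < (1 - l x - t)^(β+1) / (2 * (1/2 - l x)^(β+1)) := by gcongr
            linarith
  refine ⟨hinv, ?_⟩
  intro hs u hu x y hx0 hxy hyM
  have hx : x ∈ Set.Icc (0:ℝ) M := ⟨hx0, hxy.trans hyM⟩
  have hy : y ∈ Set.Icc (0:ℝ) M := ⟨hx0.trans hxy, hyM⟩
  obtain ⟨hu0, hu1⟩ := hu
  rw [hinv x hx u ⟨hu0, hu1⟩, hinv y hy u ⟨hu0, hu1⟩]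
  by_cases hu2 : u ≤ 1/2
  · rw [if_pos hu2, if_pos hu2]
    set c := (2*u)^(1/(β+1)) with hcdef
    have hc0 : 0 < c := Real.rpow_pos_of_pos (by linarith) _
    have hc1 : c ≤ 1 := Real.rpow_le_one (by linarith) (by linarith) (by positivity)
    have hA := aux_monoA M l hl_diff hs c hc0 hc1 hx hy hxy
    have hB := aux_monoB M l hl_diff hs c hc0 hc1 hx hy hxy
    constructor
    · exact hA
    · calc x * (1 - ((1/2 - l x) * c + l x)) = x * (1 - l x - (1/2 - l x) * c) := by ring
        _ ≤ y * (1 - l y - (1/2 - l y) * c) := hB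
        _ = y * (1 - ((1/2 - l y) * c + l y)) := by ring
  · push_neg at hu2
    rw [if_neg (not_le.2 hu2), if_neg (not_le.2 hu2)]
    set c := (2*(1-u))^(1/(β+1)) with hcdef
    have hc0 : 0 < c := Real.rpow_pos_of_pos (by linarith) _
    have hc1 : c ≤ 1 := Real.rpow_le_one (by linarith) (by linarith) (by positivity)
    have hA := aux_monoA M l hl_diff hs c hc0 hc1 hx hy hxy
    have hB := aux_monoB M l hl_diff hs c hc0 hc1 hx hy hxy
    constructor
    · exact hB
    · calc x * (1 - (1 - l x - (1/2 - l x) * c)) = x * ((1/2 - l x) * c + l x) := by ring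
        _ ≤ y * ((1/2 - l y) * c + l y) := hA
        _ = y * (1 - (1 - l y - (1/2 - l y) * c)) := by ring
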